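/- Let B be a finitely generated torsion-free abelian group, let n ≥ 1, and let σ : B × B → ℤ/nℤ be a normalized 2-cocycle. Then there exists a function φ : B → ℤ/nℤ such that the function β defined by β(b₁,b₂) = σ(b₁,b₂) − φ(b₁b₂) + φ(b₁) + φ(b₂) is a bicharacter, i.e. β(b₁b₁′, b₂) = β(b₁,b₂) + β(b₁′,b₂) and β(b₁, b₂b₂′) = β(b₁,b₂) + β(b₁,b₂′) for all b₁, b₁′, b₂, b₂′ ∈ B. -/

import Mathlib

namespace Stmt1Aux

structure Cocycle (A V : Type*) [AddCommGroup A] [AddCommGroup V] where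
  f : V → V → A
  coc : ∀ a b c : V, f a b + f (a + b) c = f b c + f a (b + c)
  n1 : ∀ v, f v 0 = 0
  n2 : ∀ v, f 0 v = 0

variable {A V : Type*} [AddCommGroup A] [AddCommGroup V]

@[ext]
structure Ext (c : Cocycle A V) where
  a : A
  v : V

namespace Ext

variable {c : Cocycle A V}

instance : Mul (Ext c) := ⟨fun x y => ⟨x.a + y.a + c.f x.v y.v, x.v + y.v⟩⟩
instance : One (Ext c) := ⟨⟨0, 0⟩⟩
instance : Inv (Ext c) := ⟨fun x => ⟨-x.a - c.f x.v (-x.v), -x.v⟩⟩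

@[simp] lemma mul_a (x y : Ext c) : (x * y).a = x.a + y.a + c.f x.v y.v := rfl
@[simp] lemma mul_v (x y : Ext c) : (x * y).v = x.v + y.v := rfl
@[simp] lemma one_a : (1 : Ext c).a = 0 := rfl
@[simp] lemma one_v : (1 : Ext c).v = 0 := rfl
@[simp] lemma inv_a (x : Ext c) : (x⁻¹).a = -x.a - c.f x.v (-x.v) := rfl
@[simp] lemma inv_v (x : Ext c) : (x⁻¹).v = -x.v := rfl

lemma f_neg_self (v : V) : c.f (-v) v = c.f v (-v) := by
  have h := c.coc v (-v) v
  simp [c.n1, c.n2] at h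
  exact h.symm

instance : Group (Ext c) where
  mul_assoc x y z := by
    have h := c.coc x.v y.v z.v
    ext
    · show x.a + y.a + c.f x.v y.v + z.a + c.f (x.v + y.v) z.v
        = x.a + (y.a + z.a + c.f y.v z.v) + c.f x.v (y.v + z.v)
      calc x.a + y.a + c.f x.v y.v + z.a + c.f (x.v + y.v) z.v
          = x.a + y.a + z.a + (c.f x.v y.v + c.f (x.v + y.v) z.v) := by abel
        _ = x.a + y.a + z.a + (c.f y.v z.v + c.f x.v (y.v + z.v)) := by rw [h]
        _ = x.a + (y.a + z.a + c.f y.v z.v) + c.f x.v (y.v + z.v) := by abel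
    · show x.v + y.v + z.v = x.v + (y.v + z.v); exact add_assoc _ _ _
  one_mul x := by ext <;> simp [c.n2]
  mul_one x := by ext <;> simp [c.n1]
  inv_mul_cancel x := by
    ext
    · show -x.a - c.f x.v (-x.v) + x.a + c.f (-x.v) x.v = 0
      rw [f_neg_self]; abel
    · show -x.v + x.v = 0; simp

/-- central embedding of `A` -/
def z (a : A) : Ext c := ⟨a, 0⟩

@[simp] lemma z_a (a : A) : (z (c := c) a).a = a := rfl
@[simp] lemma z_v (a : A) : (z (c := c) a).v = 0 := rfl

@[simp] lemma z_zero : (z 0 : Ext c) = 1 := rfl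

@[simp] lemma z_mul_z (a b : A) : (z a : Ext c) * z b = z (a + b) := by
  ext <;> simp [c.n2]

lemma z_comm (a : A) (x : Ext c) : x * z a = z a * x := by
  ext <;> simp [c.n1, c.n2] <;> abel

/-- move a central factor out to the left -/
lemma zl (a : A) (x y : Ext c) : x * (z a * y) = z a * (x * y) := by
  rw [← mul_assoc, z_comm, mul_assoc]

lemma zz (a b : A) (y : Ext c) : z a * (z b * y) = z (a + b) * y := by
  rw [← mul_assoc, z_mul_z]

/-- `z` as a monoid hom from `Multiplicative A`. -/
def zhom : Multiplicative A →* Ext c where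
  toFun a := z a.toAdd
  map_one' := rfl
  map_mul' x y := by simp

@[simp] lemma z_zpow (a : A) (k : ℤ) : (z a : Ext c) ^ k = z (k • a) := by
  have := map_zpow (zhom (c := c)) (Multiplicative.ofAdd a) k
  rw [← ofAdd_zsmul] at this
  exact this.symm

/-- projection as a monoid hom -/
def vhom : Ext c →* Multiplicative V where
  toFun x := Multiplicative.ofAdd x.v
  map_one' := rfl
  map_mul' x y := rfl

@[simp] lemma zpow_v (x : Ext c) (k : ℤ) : (x ^ k).v = k • x.v := by
  have := map_zpow (vhom (c := c)) x k
  have h2 : Multiplicative.ofAdd ((x ^ k).v) = Multiplicative.ofAdd (k • x.v) := by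
    rw [show Multiplicative.ofAdd ((x ^ k).v) = vhom (c := c) (x ^ k) from rfl, this]
    rw [ofAdd_zsmul]
    rfl
  exact Multiplicative.ofAdd.injective h2


lemma swap_one {x y : Ext c} {a : A} (h : x * y = z a * (y * x)) :
    ∀ k : ℤ, x * y ^ k = z (k • a) * (y ^ k * x) := by
  have hinv : x * y⁻¹ = z (-a) * (y⁻¹ * x) := by
    have h1 : y * x = z (-a) * (x * y) := by
      rw [h, zz]; simp
    calc x * y⁻¹ = y⁻¹ * (y * (x * y⁻¹)) := by group
      _ = y⁻¹ * (y * x * y⁻¹) := by rw [mul_assoc]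
      _ = y⁻¹ * (z (-a) * (x * y) * y⁻¹) := by rw [h1]
      _ = z (-a) * (y⁻¹ * (x * (y * y⁻¹))) := by
          rw [mul_assoc (z (-a)), zl, mul_assoc]
      _ = z (-a) * (y⁻¹ * x) := by group
  intro k
  induction k using Int.induction_on with
  | zero => simp
  | succ k ih =>
    have : x * y ^ ((k : ℤ) + 1) = (x * y ^ (k : ℤ)) * y := by
      rw [zpow_add, zpow_one, mul_assoc]
    rw [this, ih, mul_assoc, mul_assoc, h, zl, zz, ← mul_assoc (y ^ (k:ℤ)), ← zpow_add_one,
      show ((k:ℤ) + 1) • a = (k:ℤ) • a + a by rw [add_smul, one_smul]]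
  | pred k ih =>
    have : x * y ^ (-(k : ℤ) - 1) = (x * y ^ (-(k : ℤ))) * y⁻¹ := by
      rw [sub_eq_add_neg, zpow_add, zpow_neg_one, mul_assoc]
    have hy : y ^ (-(k:ℤ)) * y⁻¹ = y ^ (-(k:ℤ) - 1) := by
      rw [sub_eq_add_neg, zpow_add, zpow_neg_one]
    rw [this, ih, mul_assoc, mul_assoc, hinv, zl, zz, ← mul_assoc (y ^ (-(k:ℤ))), hy,
      show (-(k:ℤ) - 1) • a = -(k:ℤ) • a + -a by
        rw [sub_smul, one_smul, sub_eq_add_neg, neg_smul]]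

lemma swap {x y : Ext c} {a : A} (h : x * y = z a * (y * x)) (m k : ℤ) :
    x ^ m * y ^ k = z ((m * k) • a) * (y ^ k * x ^ m) := by
  have H := swap_one h k
  have H' : y ^ k * x = z (-(k • a)) * (x * y ^ k) := by
    rw [H, zz]; simp
  have H2 := swap_one H' m
  -- H2 : y ^ k * x ^ m = z (m • -(k • a)) * (x ^ m * y ^ k)
  rw [H2, zz]
  have : (m * k) • a + m • -(k • a) = 0 := by
    rw [smul_neg, smul_smul, ← sub_eq_add_neg, sub_self]
  rw [this]
  simp


section Lists

variable {ι : Type*} (c : Cocycle A V) (e : ι → V)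

/-- the canonical lift of generator `e i` -/
def t (i : ι) : Ext c := ⟨0, e i⟩

/-- commutator values of the generators -/
def γ (i j : ι) : A := c.f (e i) (e j) - c.f (e j) (e i)

lemma t_comm (i j : ι) : t c e i * t c e j = z (γ c e i j) * (t c e j * t c e i) := by
  ext
  · show (0:A) + 0 + c.f (e i) (e j)
      = γ c e i j + ((0:A) + 0 + c.f (e j) (e i)) + c.f 0 (e j + e i)
    rw [c.n2, γ]; abel
  · show e i + e j = 0 + (e j + e i); rw [zero_add, add_comm]

lemma t_swap (i j : ι) (m k : ℤ) :
    t c e i ^ m * t c e j ^ k = z ((m * k) • γ c e i j) * (t c e j ^ k * t c e i ^ m) :=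
  swap (t_comm c e i j) m k

/-- ordered product of generator powers -/
def P (L : List ι) (v : ι → ℤ) : Ext c := (L.map fun i => t c e i ^ v i).prod

@[simp] lemma P_nil (v : ι → ℤ) : P c e [] v = 1 := rfl

lemma P_cons (i : ι) (L : List ι) (v : ι → ℤ) :
    P c e (i :: L) v = t c e i ^ v i * P c e L v := by
  simp [P]

/-- the `A`-valued correction term -/
def QA : List ι → (ι → ℤ) → (ι → ℤ) → A
  | [], _, _ => 0
  | i :: L, v, w => (L.map fun j => (v j * w i) • γ c e j i).sum + QA L v w

lemma P_mul_t (L : List ι) (v : ι → ℤ) (i : ι) (k : ℤ) :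
    P c e L v * t c e i ^ k
      = z ((L.map fun j => (v j * k) • γ c e j i).sum) * (t c e i ^ k * P c e L v) := by
  induction L with
  | nil => simp
  | cons j L ih =>
    set S := (L.map fun j' => (v j' * k) • γ c e j' i).sum with hS
    calc P c e (j :: L) v * t c e i ^ k
        = t c e j ^ v j * (P c e L v * t c e i ^ k) := by rw [P_cons, mul_assoc]
      _ = t c e j ^ v j * (z S * (t c e i ^ k * P c e L v)) := by rw [ih]
      _ = z S * (t c e j ^ v j * t c e i ^ k * P c e L v) := by
          rw [zl, mul_assoc]
      _ = z S * (z ((v j * k) • γ c e j i) * (t c e i ^ k * t c e j ^ v j) * P c e L v) := by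
          rw [t_swap]
      _ = z (((j :: L).map fun j' => (v j' * k) • γ c e j' i).sum)
            * (t c e i ^ k * P c e (j :: L) v) := by
          rw [List.map_cons, List.sum_cons, mul_assoc (z _), zz, add_comm S, P_cons, ← hS, mul_assoc (t c e i ^ k)]

lemma P_mul_P (L : List ι) (v w : ι → ℤ) :
    P c e L v * P c e L w = z (QA c e L v w) * P c e L (v + w) := by
  induction L with
  | nil => simp [QA]
  | cons i L ih =>
    set S := (L.map fun j => (v j * w i) • γ c e j i).sum with hS
    calc P c e (i :: L) v * P c e (i :: L) w
        = t c e i ^ v i * ((P c e L v * t c e i ^ w i) * P c e L w) := by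
          rw [P_cons, P_cons, mul_assoc, mul_assoc]
      _ = t c e i ^ v i * (z S * (t c e i ^ w i * P c e L v) * P c e L w) := by
          rw [P_mul_t]
      _ = z S * (t c e i ^ v i * (t c e i ^ w i * (P c e L v * P c e L w))) := by
          rw [mul_assoc (z S), zl, mul_assoc (t c e i ^ w i)]
      _ = z S * (t c e i ^ (v i + w i) * (z (QA c e L v w) * P c e L (v + w))) := by
          rw [ih, ← mul_assoc (t c e i ^ v i) (t c e i ^ w i), ← zpow_add]
      _ = z (QA c e (i :: L) v w) * P c e (i :: L) (v + w) := by
          rw [zl, zz, QA, P_cons, Pi.add_apply]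

lemma QA_add_left (L : List ι) (v v' w : ι → ℤ) :
    QA c e L (v + v') w = QA c e L v w + QA c e L v' w := by
  induction L with
  | nil => simp [QA]
  | cons i L ih =>
    simp only [QA, ih]
    have : (L.map fun j => ((v + v') j * w i) • γ c e j i)
        = L.map fun j => (v j * w i) • γ c e j i + (v' j * w i) • γ c e j i := by
      refine List.map_congr_left fun j _ => ?_
      rw [Pi.add_apply, add_mul, add_smul]
    rw [this, List.sum_map_add]
    abel

lemma QA_add_right (L : List ι) (v w w' : ι → ℤ) :
    QA c e L v (w + w') = QA c e L v w + QA c e L v w' := by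
  induction L with
  | nil => simp [QA]
  | cons i L ih =>
    simp only [QA, ih]
    have : (L.map fun j => (v j * (w + w') i) • γ c e j i)
        = L.map fun j => (v j * w i) • γ c e j i + (v j * w' i) • γ c e j i := by
      refine List.map_congr_left fun j _ => ?_
      rw [Pi.add_apply, mul_add, add_smul]
    rw [this, List.sum_map_add]
    abel

lemma P_v (L : List ι) (v : ι → ℤ) :
    (P c e L v).v = (L.map fun i => v i • e i).sum := by
  induction L with
  | nil => simp
  | cons i L ih =>
    rw [P_cons, mul_v, ih, List.map_cons, List.sum_cons, zpow_v]
    rfl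

end Lists

end Ext

section Aux

open Ext

theorem aux {ι A' : Type*} [Fintype ι] [DecidableEq ι] [AddCommGroup A']
    (c : Cocycle A' (ι → ℤ)) :
    ∃ φ : (ι → ℤ) → A', ∃ Q : (ι → ℤ) → (ι → ℤ) → A',
      (∀ v w, c.f v w - φ (v + w) + φ v + φ w = Q v w) ∧
      (∀ v v' w, Q (v + v') w = Q v w + Q v' w) ∧
      (∀ v w w', Q v (w + w') = Q v w + Q v w') := by
  set e : ι → (ι → ℤ) := fun i => Pi.single i 1 with he
  set L : List ι := (Finset.univ : Finset ι).toList with hL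
  have hsv : ∀ v, (P c e L v).v = v := by
    intro v
    rw [P_v]
    have : (L.map fun i => v i • e i) = L.map fun i => Pi.single i (v i) := by
      refine List.map_congr_left fun i _ => ?_
      rw [he, ← Pi.single_smul, smul_eq_mul, mul_one]
    rw [this, hL, Finset.sum_map_toList, Finset.univ_sum_single]
  refine ⟨fun v => (P c e L v).a, fun v w => QA c e L v w, fun v w => ?_,
    fun v v' w => QA_add_left c e L v v' w, fun v w w' => QA_add_right c e L v w w'⟩
  have ha := congrArg Ext.a (P_mul_P c e L v w)
  simp only [mul_a, z_a, z_v, hsv, c.n2, add_zero] at ha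
  calc c.f v w - (P c e L (v + w)).a + (P c e L v).a + (P c e L w).a
      = ((P c e L v).a + (P c e L w).a + c.f v w) - (P c e L (v + w)).a := by abel
    _ = (QA c e L v w + (P c e L (v + w)).a) - (P c e L (v + w)).a := by rw [ha]
    _ = QA c e L v w := by abel

end Aux

end Stmt1Aux
/-- Let `B` be a finitely generated torsion-free abelian group, `n ≥ 1`,
and `σ : B × B → ℤ/nℤ` a normalized 2-cocycle.  Then there is `φ : B → ℤ/nℤ` such that
`β(b₁,b₂) = σ(b₁,b₂) − φ(b₁b₂) + φ(b₁) + φ(b₂)` is a bicharacter. -/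
theorem stmt1 {B : Type*} [CommGroup B] (hfg : Group.FG B)
    (htf : ∀ b : B, b ≠ 1 → ¬ IsOfFinOrder b)
    (n : ℕ) (hn : 1 ≤ n) (σ : B → B → ZMod n)
    (hcoc : ∀ b₁ b₂ b₃ : B, σ b₁ b₂ + σ (b₁ * b₂) b₃ = σ b₂ b₃ + σ b₁ (b₂ * b₃))
    (hnorm₁ : ∀ b : B, σ b 1 = 0) (hnorm₂ : ∀ b : B, σ 1 b = 0) :
    ∃ φ : B → ZMod n, ∀ β : B → B → ZMod n,
      (∀ b₁ b₂ : B, β b₁ b₂ = σ b₁ b₂ - φ (b₁ * b₂) + φ b₁ + φ b₂) →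
      (∀ b₁ b₁' b₂ : B, β (b₁ * b₁') b₂ = β b₁ b₂ + β b₁' b₂) ∧
      (∀ b₁ b₂ b₂' : B, β b₁ (b₂ * b₂') = β b₁ b₂ + β b₁ b₂') := by
  classical
  haveI hfin : Module.Finite ℤ (Additive B) :=
    Module.Finite.iff_addGroup_fg.mpr (GroupFG.iff_add_fg.mp hfg)
  haveI : NoZeroSMulDivisors ℤ (Additive B) := by
    constructor
    intro k x hkx
    by_contra hc
    push_neg at hc
    obtain ⟨hk, hx⟩ := hc
    refine htf x.toMul ?_ ?_
    · simpa using hx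
    · rw [isOfFinOrder_iff_zpow_eq_one]
      refine ⟨k, hk, ?_⟩
      rw [← toMul_zsmul, hkx]
      rfl
  haveI : Module.Free ℤ (Additive B) := Module.free_of_finite_type_torsion_free'
  let ι := Module.Free.ChooseBasisIndex ℤ (Additive B)
  let F0 := (Module.Free.chooseBasis ℤ (Additive B)).equivFun
  let F : B → (ι → ℤ) := fun b => F0 (Additive.ofMul b)
  let G : (ι → ℤ) → B := fun v => Additive.toMul (F0.symm v)
  have hGF : ∀ b, G (F b) = b := fun b => by simp [F, G]
  have hFmul : ∀ b₁ b₂, F (b₁ * b₂) = F b₁ + F b₂ := fun b₁ b₂ => by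
    show F0 (Additive.ofMul (b₁ * b₂)) = _
    rw [ofMul_mul, map_add]
  have hGadd : ∀ v w, G (v + w) = G v * G w := fun v w => by
    show Additive.toMul (F0.symm (v + w)) = _
    rw [map_add, toMul_add]
  have hG1 : G 0 = 1 := by
    show Additive.toMul (F0.symm 0) = 1
    rw [map_zero]
    rfl
  let c : Stmt1Aux.Cocycle (ZMod n) (ι → ℤ) :=
    { f := fun v w => σ (G v) (G w)
      coc := fun a b d => by
        show σ (G a) (G b) + σ (G (a + b)) (G d) = σ (G b) (G d) + σ (G a) (G (b + d))
        rw [hGadd, hGadd]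
        exact hcoc (G a) (G b) (G d)
      n1 := fun v => by
        show σ (G v) (G 0) = 0
        rw [hG1]; exact hnorm₁ _
      n2 := fun v => by
        show σ (G 0) (G v) = 0
        rw [hG1]; exact hnorm₂ _ }
  obtain ⟨φ', Q, hkey, hQl, hQr⟩ := Stmt1Aux.aux c
  refine ⟨fun b => φ' (F b), fun β hβ => ?_⟩
  have hβ' : ∀ b₁ b₂, β b₁ b₂ = Q (F b₁) (F b₂) := by
    intro b₁ b₂
    rw [hβ]
    show σ b₁ b₂ - φ' (F (b₁ * b₂)) + φ' (F b₁) + φ' (F b₂) = Q (F b₁) (F b₂)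
    rw [hFmul, ← hkey (F b₁) (F b₂)]
    have hf : c.f (F b₁) (F b₂) = σ b₁ b₂ := by
      show σ (G (F b₁)) (G (F b₂)) = σ b₁ b₂
      rw [hGF, hGF]
    rw [hf]
  constructor
  · intro b₁ b₁' b₂
    rw [hβ' (b₁ * b₁') b₂, hβ' b₁ b₂, hβ' b₁' b₂, hFmul, hQl]
  · intro b₁ b₂ b₂'
    rw [hβ' b₁ (b₂ * b₂'), hβ' b₁ b₂, hβ' b₁ b₂', hFmul, hQr]
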